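/- For any l > 0 and I > 0, the additive TMCMC limiting acceptance rate a_T(l) = 4 ∫_0^∞ Φ(−u l √I/2) φ(u) du is strictly greater than the RWMH limiting acceptance rate a_R(l) = 2 Φ(−l √I/2). -/

import Mathlib

open Real MeasureTheory

/-- The standard normal density `φ`. -/
noncomputable def stdNormalPDF (u : ℝ) : ℝ :=
  (Real.sqrt (2 * Real.pi))⁻¹ * Real.exp (-u ^ 2 / 2)

/-- The standard normal CDF `Φ`. -/
noncomputable def stdNormalCDF (t : ℝ) : ℝ :=
  ∫ u in Set.Iic t, stdNormalPDF u

open Set Filter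

lemma pdf_eq (u : ℝ) : stdNormalPDF u = (Real.sqrt (2 * Real.pi))⁻¹ * Real.exp (-(1/2) * u ^ 2) := by
  unfold stdNormalPDF
  congr 1
  ring

lemma pdf_cont : Continuous stdNormalPDF := by
  unfold stdNormalPDF
  exact continuous_const.mul ((continuous_pow 2).neg.div_const 2).rexp

lemma pdf_pos (u : ℝ) : 0 < stdNormalPDF u := by
  unfold stdNormalPDF
  positivity

lemma pdf_integrable : Integrable stdNormalPDF := by
  have h := integrable_exp_neg_mul_sq (b := (1/2 : ℝ)) (by norm_num)
  have := h.const_mul ((Real.sqrt (2 * Real.pi))⁻¹)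
  refine this.congr ?_
  filter_upwards with u
  rw [pdf_eq]

lemma pdf_mul_integrable : Integrable (fun u : ℝ => u * stdNormalPDF u) := by
  have h := integrable_mul_exp_neg_mul_sq (b := (1/2 : ℝ)) (by norm_num)
  have := h.const_mul ((Real.sqrt (2 * Real.pi))⁻¹)
  refine this.congr ?_
  filter_upwards with u
  rw [pdf_eq]; ring

lemma cdf_sub (a b : ℝ) :
    stdNormalCDF b - stdNormalCDF a = ∫ u in a..b, stdNormalPDF u :=
  intervalIntegral.integral_Iic_sub_Iic pdf_integrable.integrableOn pdf_integrable.integrableOn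

lemma sqrt_two_pi_pos : 0 < Real.sqrt (2 * Real.pi) := by
  positivity

lemma int_pdf_total : ∫ u : ℝ, stdNormalPDF u = 1 := by
  have h : ∫ u : ℝ, Real.exp (-(1/2 : ℝ) * u ^ 2) = Real.sqrt (π / (1/2)) :=
    integral_gaussian (1/2)
  calc ∫ u : ℝ, stdNormalPDF u
      = ∫ u : ℝ, (Real.sqrt (2 * Real.pi))⁻¹ * Real.exp (-(1/2 : ℝ) * u ^ 2) := by
        simp_rw [pdf_eq]
    _ = (Real.sqrt (2 * Real.pi))⁻¹ * ∫ u : ℝ, Real.exp (-(1/2 : ℝ) * u ^ 2) := by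
        rw [integral_const_mul]
    _ = 1 := by
        rw [h, show π / (1/2 : ℝ) = 2 * π by ring]
        exact inv_mul_cancel₀ (ne_of_gt sqrt_two_pi_pos)

lemma int_pdf_Ioi : ∫ u in Ioi (0:ℝ), stdNormalPDF u = 1/2 := by
  have h : ∫ u in Ioi (0:ℝ), Real.exp (-(1/2 : ℝ) * u ^ 2) = Real.sqrt (π / (1/2)) / 2 :=
    integral_gaussian_Ioi (1/2)
  calc ∫ u in Ioi (0:ℝ), stdNormalPDF u
      = ∫ u in Ioi (0:ℝ), (Real.sqrt (2 * Real.pi))⁻¹ * Real.exp (-(1/2 : ℝ) * u ^ 2) := by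
        simp_rw [pdf_eq]
    _ = (Real.sqrt (2 * Real.pi))⁻¹ * ∫ u in Ioi (0:ℝ), Real.exp (-(1/2 : ℝ) * u ^ 2) := by
        rw [integral_const_mul]
    _ = 1/2 := by
        rw [h, show π / (1/2 : ℝ) = 2 * π by ring]
        rw [← mul_div_assoc, inv_mul_cancel₀ (ne_of_gt sqrt_two_pi_pos)]

lemma int_mul_exp_Ioi : ∫ u in Ioi (0:ℝ), u * Real.exp (-u ^ 2 / 2) = 1 := by
  have hderiv : ∀ x ∈ Ici (0:ℝ), HasDerivAt (fun u : ℝ => -Real.exp (-u ^ 2 / 2))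
      (x * Real.exp (-x ^ 2 / 2)) x := by
    intro x _
    have h1 : HasDerivAt (fun u : ℝ => -u ^ 2 / 2) (-x) x := by
      have := ((hasDerivAt_pow 2 x).neg).div_const 2
      refine this.congr_deriv ?_
      simp
      ring
    have h2 := (h1.exp).neg
    refine h2.congr_deriv ?_
    ring
  have hint : IntegrableOn (fun u : ℝ => u * Real.exp (-u ^ 2 / 2)) (Ioi 0) := by
    have h := integrable_mul_exp_neg_mul_sq (b := (1/2 : ℝ)) (by norm_num)
    refine (h.congr ?_).integrableOn
    filter_upwards with u
    congr 1
    ring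
  have htend : Tendsto (fun u : ℝ => -Real.exp (-u ^ 2 / 2)) atTop (nhds 0) := by
    have h2 : Tendsto (fun u : ℝ => u ^ 2 / 2) atTop atTop :=
      (tendsto_pow_atTop two_ne_zero).atTop_div_const two_pos
    have h1 : Tendsto (fun u : ℝ => -u ^ 2 / 2) atTop atBot := by
      have := tendsto_neg_atTop_atBot.comp h2
      simpa [Function.comp_def, neg_div] using this
    have h0 : Tendsto (fun u : ℝ => Real.exp (-u ^ 2 / 2)) atTop (nhds 0) :=
      Real.tendsto_exp_atBot.comp h1
    simpa using h0.neg
  have := integral_Ioi_of_hasDerivAt_of_tendsto' hderiv hint htend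
  rw [this]
  norm_num

lemma int_mul_pdf_Ioi : ∫ u in Ioi (0:ℝ), u * stdNormalPDF u = (Real.sqrt (2 * Real.pi))⁻¹ := by
  calc ∫ u in Ioi (0:ℝ), u * stdNormalPDF u
      = ∫ u in Ioi (0:ℝ), (Real.sqrt (2 * Real.pi))⁻¹ * (u * Real.exp (-u ^ 2 / 2)) := by
        apply setIntegral_congr_fun measurableSet_Ioi
        intro u _
        unfold stdNormalPDF
        ring
    _ = (Real.sqrt (2 * Real.pi))⁻¹ * ∫ u in Ioi (0:ℝ), u * Real.exp (-u ^ 2 / 2) := by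
        rw [integral_const_mul]
    _ = (Real.sqrt (2 * Real.pi))⁻¹ := by rw [int_mul_exp_Ioi, mul_one]

lemma cdf_mono : Monotone stdNormalCDF := by
  intro a b hab
  unfold stdNormalCDF
  apply setIntegral_mono_set pdf_integrable.integrableOn
  · filter_upwards with u using (pdf_pos u).le
  · exact HasSubset.Subset.eventuallyLE (Iic_subset_Iic.2 hab)

lemma cdf_meas : Measurable stdNormalCDF := cdf_mono.measurable

lemma cdf_nonneg (t : ℝ) : 0 ≤ stdNormalCDF t :=
  setIntegral_nonneg measurableSet_Iic (fun u _ => (pdf_pos u).le)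

lemma cdf_le_one (t : ℝ) : stdNormalCDF t ≤ 1 := by
  rw [← int_pdf_total]
  exact setIntegral_le_integral pdf_integrable
    (by filter_upwards with u using (pdf_pos u).le)

lemma tangent (c : ℝ) (hc : 0 < c) (u : ℝ) (hu : 0 ≤ u) :
    stdNormalCDF (-c) - c * stdNormalPDF c * (u - 1) ≤ stdNormalCDF (-(u * c)) := by
  rcases le_total u 1 with hu1 | hu1
  · -- u ≤ 1 : -c ≤ -(u*c)
    have hab : -c ≤ -(u * c) := by nlinarith
    have key : (-(u * c) - -c) * stdNormalPDF c ≤ ∫ x in (-c)..(-(u * c)), stdNormalPDF x := by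
      have hmono := intervalIntegral.integral_mono_on (μ := volume)
        (f := fun _ : ℝ => stdNormalPDF c) (g := stdNormalPDF) hab
        (intervalIntegrable_const) (pdf_cont.intervalIntegrable _ _) ?_
      · rw [intervalIntegral.integral_const, smul_eq_mul] at hmono
        linarith
      · intro x hx
        unfold stdNormalPDF
        apply mul_le_mul_of_nonneg_left _ (by positivity)
        apply Real.exp_le_exp.2
        have h1 : -c ≤ x := hx.1
        have h2 : x ≤ -(u * c) := hx.2
        have hx0 : x ≤ 0 := h2.trans (by nlinarith [mul_nonneg hu hc.le])
        nlinarith [mul_nonneg (by linarith : (0:ℝ) ≤ c - x) (by linarith : (0:ℝ) ≤ c + x)]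
    rw [← cdf_sub] at key
    nlinarith
  · -- 1 ≤ u : -(u*c) ≤ -c
    have hab : -(u * c) ≤ -c := by nlinarith
    have key : (∫ x in (-(u * c))..(-c), stdNormalPDF x) ≤ (-c - -(u * c)) * stdNormalPDF c := by
      have hmono := intervalIntegral.integral_mono_on (μ := volume)
        (f := stdNormalPDF) (g := fun _ : ℝ => stdNormalPDF c) hab
        (pdf_cont.intervalIntegrable _ _) (intervalIntegrable_const) ?_
      · rw [intervalIntegral.integral_const, smul_eq_mul] at hmono
        linarith
      · intro x hx
        unfold stdNormalPDF
        apply mul_le_mul_of_nonneg_left _ (by positivity)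
        apply Real.exp_le_exp.2
        have h1 : -(u * c) ≤ x := hx.1
        have h2 : x ≤ -c := hx.2
        nlinarith [mul_nonneg (by linarith : (0:ℝ) ≤ -x - c) (by linarith : (0:ℝ) ≤ -x + c)]
    rw [← cdf_sub] at key
    nlinarith

/-- For `l > 0`, `I > 0`, the ATMCMC limiting acceptance rate strictly exceeds the
RWMH limiting acceptance rate: `4∫₀^∞ Φ(−ul√I/2)φ(u)du > 2Φ(−l√I/2)`. -/
theorem atmcmc_acceptance_gt_rwmh (l I : ℝ) (hl : 0 < l) (hI : 0 < I) :
    2 * stdNormalCDF (-(l * Real.sqrt I) / 2)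
      < 4 * ∫ u in Set.Ioi (0 : ℝ),
          stdNormalCDF (-(u * l * Real.sqrt I) / 2) * stdNormalPDF u := by
  set c : ℝ := l * Real.sqrt I / 2 with hcdef
  have hc : 0 < c := by
    have : 0 < Real.sqrt I := Real.sqrt_pos.2 hI
    positivity
  set A : ℝ := stdNormalCDF (-c) with hA
  set B : ℝ := c * stdNormalPDF c with hB
  have hBpos : 0 < B := mul_pos hc (pdf_pos c)
  -- rewrite the integrand
  have harg : ∀ u : ℝ, -(u * l * Real.sqrt I) / 2 = -(u * c) := by
    intro u; rw [hcdef]; ring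
  have harg2 : -(l * Real.sqrt I) / 2 = -c := by rw [hcdef]; ring
  rw [harg2]
  have hrw : (fun u : ℝ => stdNormalCDF (-(u * l * Real.sqrt I) / 2) * stdNormalPDF u)
      = fun u : ℝ => stdNormalCDF (-(u * c)) * stdNormalPDF u := by
    funext u; rw [harg u]
  rw [hrw]
  -- integrability of the main integrand
  have hg_meas : AEStronglyMeasurable (fun u : ℝ => stdNormalCDF (-(u * c)) * stdNormalPDF u)
      (volume.restrict (Ioi 0)) := by
    refine AEStronglyMeasurable.mul ?_ pdf_cont.aestronglyMeasurable.restrict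
    exact (cdf_meas.comp (by fun_prop : Measurable fun u : ℝ => -(u * c))).aestronglyMeasurable
  have hg_int : IntegrableOn (fun u : ℝ => stdNormalCDF (-(u * c)) * stdNormalPDF u) (Ioi 0) := by
    refine Integrable.mono' pdf_integrable.integrableOn hg_meas ?_
    filter_upwards with u
    rw [Real.norm_eq_abs, abs_of_nonneg (mul_nonneg (cdf_nonneg _) (pdf_pos u).le)]
    calc stdNormalCDF (-(u * c)) * stdNormalPDF u
        ≤ 1 * stdNormalPDF u := mul_le_mul_of_nonneg_right (cdf_le_one _) (pdf_pos u).le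
      _ = stdNormalPDF u := one_mul _
  -- integrability of the lower bound
  have hL_int : IntegrableOn (fun u : ℝ => (A - B * (u - 1)) * stdNormalPDF u) (Ioi 0) := by
    have h1 : Integrable (fun u : ℝ => (A + B) * stdNormalPDF u - B * (u * stdNormalPDF u)) :=
      (pdf_integrable.const_mul _).sub (pdf_mul_integrable.const_mul _)
    refine (h1.congr ?_).integrableOn
    filter_upwards with u
    ring
  -- pointwise comparison
  have hstep : (∫ u in Ioi (0:ℝ), (A - B * (u - 1)) * stdNormalPDF u)
      ≤ ∫ u in Ioi (0:ℝ), stdNormalCDF (-(u * c)) * stdNormalPDF u := by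
    refine setIntegral_mono_on hL_int hg_int measurableSet_Ioi ?_
    intro u hu
    exact mul_le_mul_of_nonneg_right (tangent c hc u (le_of_lt hu)) (pdf_pos u).le
  -- compute the lower bound integral
  have hcalc : (∫ u in Ioi (0:ℝ), (A - B * (u - 1)) * stdNormalPDF u)
      = (A + B) * (1/2) - B * (Real.sqrt (2 * Real.pi))⁻¹ := by
    have hsplit : (∫ u in Ioi (0:ℝ), (A - B * (u - 1)) * stdNormalPDF u)
        = ∫ u in Ioi (0:ℝ),
            ((A + B) * stdNormalPDF u - B * (u * stdNormalPDF u)) := by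
      apply setIntegral_congr_fun measurableSet_Ioi
      intro u _
      ring
    rw [hsplit, integral_sub ((pdf_integrable.const_mul _).integrableOn)
        ((pdf_mul_integrable.const_mul _).integrableOn),
      integral_const_mul, integral_const_mul, int_pdf_Ioi, int_mul_pdf_Ioi]
  -- conclude
  have hlt : (Real.sqrt (2 * Real.pi))⁻¹ < 1/2 := by
    rw [inv_lt_comm₀ sqrt_two_pi_pos (by norm_num)]
    rw [show (1/2 : ℝ)⁻¹ = 2 by norm_num]
    have : (2:ℝ) = Real.sqrt 4 := by
      rw [show (4:ℝ) = 2^2 by norm_num, Real.sqrt_sq (by norm_num)]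
    rw [this]
    apply Real.sqrt_lt_sqrt (by norm_num)
    nlinarith [Real.pi_gt_three]
  nlinarith [hstep, hcalc, hBpos, hlt]
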